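/- Let μ ∈ ℝ and let s ∈ {+1, −1}. For τ ∈ ℝ set S_s(τ) := ν_F|k'|τ·m₁ + μν_F|ℓ|·m₂ + s·ϑ⋆·m₃. Then for every τ ∈ ℝ the eigenvalues of S_s(τ) are exactly +√(ν_F²|k'|²τ² + μ²ν_F²|ℓ|² + ϑ⋆²) and −√(ν_F²|k'|²τ² + μ²ν_F²|ℓ|² + ϑ⋆²). Consequently, for z ∈ ℂ there exists τ ∈ ℝ such that S_s(τ) − z·I is not invertible if and only if z is real and z² ≥ ϑ_F² + μ²ν_F²|ℓ|²; that is, the union over τ ∈ ℝ of the spectra of S_s(τ) equals ℝ ∖ (−√(ϑ_F² + μ²ν_F²|ℓ|²), √(ϑ_F² + μ²ν_F²|ℓ|²)). -/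

import Mathlib

open Matrix

/-- The matrix `m₁ = (ν_F|k'|)⁻¹ [[0, ν⋆k'], [conj(ν⋆k'), 0]]`. -/
noncomputable def m1 (ν k' : ℂ) : Matrix (Fin 2) (Fin 2) ℂ :=
  (‖ν‖ * ‖k'‖)⁻¹ • !![0, ν * k'; (starRingEnd ℂ) (ν * k'), 0]

/-- The matrix `m₂ = (ν_F|ℓ|)⁻¹ [[0, ν⋆ℓ], [conj(ν⋆ℓ), 0]]`. -/
noncomputable def m2 (ν ℓ : ℂ) : Matrix (Fin 2) (Fin 2) ℂ :=
  (‖ν‖ * ‖ℓ‖)⁻¹ • !![0, ν * ℓ; (starRingEnd ℂ) (ν * ℓ), 0]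

/-- The matrix `m₃ = [[1, 0], [0, −1]]`. -/
def m3 : Matrix (Fin 2) (Fin 2) ℂ := !![1, 0; 0, -1]

/-- The Fourier symbol `S_s(τ) = ν_F|k'|τ m₁ + μν_F|ℓ| m₂ + sϑ⋆ m₃` of the asymptotic
Dirac operator `D_±(μ)`. -/
noncomputable def Ssym (ϑstar : ℝ) (ν k' ℓ : ℂ) (μ s τ : ℝ) :
    Matrix (Fin 2) (Fin 2) ℂ :=
  (‖ν‖ * ‖k'‖ * τ) • m1 ν k' + (μ * ‖ν‖ * ‖ℓ‖) • m2 ν ℓ + (s * ϑstar) • m3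

lemma Ssym_eq (ϑ : ℝ) (ν k' ℓ : ℂ) (hν : ν ≠ 0) (hk : k' ≠ 0) (hℓ : ℓ ≠ 0) (μ s τ : ℝ) :
    Ssym ϑ ν k' ℓ μ s τ =
      !![((s*ϑ : ℝ) : ℂ), ν*(τ*k'+μ*ℓ);
         (starRingEnd ℂ) (ν*(τ*k'+μ*ℓ)), -((s*ϑ : ℝ) : ℂ)] := by
  have a1 : (‖ν‖ : ℂ) ≠ 0 := by simpa using (norm_ne_zero_iff.mpr hν)
  have a2 : (‖k'‖ : ℂ) ≠ 0 := by simpa using (norm_ne_zero_iff.mpr hk)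
  have a3 : (‖ℓ‖ : ℂ) ≠ 0 := by simpa using (norm_ne_zero_iff.mpr hℓ)
  ext i j
  fin_cases i <;> fin_cases j <;>
    simp [Ssym, m1, m2, m3, Complex.real_smul, map_add, _root_.map_mul] <;>
    field_simp <;> ring

lemma key (ϑ : ℝ) (ν k' ℓ : ℂ) (hν : ν ≠ 0) (hk : k' ≠ 0) (hℓ : ℓ ≠ 0)
    (horth : (k' * (starRingEnd ℂ) ℓ).re = 0)
    (μ s : ℝ) (hs2 : s ^ 2 = 1) (τ : ℝ) (z : ℂ) :
    (¬ IsUnit (Ssym ϑ ν k' ℓ μ s τ - z • (1 : Matrix (Fin 2) (Fin 2) ℂ))) ↔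
      z ^ 2 = ((‖ν‖^2*‖k'‖^2*τ^2 + μ^2*‖ν‖^2*‖ℓ‖^2 + ϑ^2 : ℝ) : ℂ) := by
  rw [Ssym_eq ϑ ν k' ℓ hν hk hℓ μ s τ]
  set a : ℂ := ((s*ϑ : ℝ) : ℂ) with ha'
  set w : ℂ := ν*(τ*k'+μ*ℓ) with hw
  have hM : (!![a, w; (starRingEnd ℂ) w, -a] - z • (1 : Matrix (Fin 2) (Fin 2) ℂ))
      = !![a - z, w; (starRingEnd ℂ) w, -a - z] := by
    ext i j
    fin_cases i <;> fin_cases j <;> simp [Matrix.one_apply] <;> ring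
  rw [hM, Matrix.isUnit_iff_isUnit_det, Matrix.det_fin_two_of, isUnit_iff_ne_zero, not_not]
  have hs2C : ((s:ℂ))^2 = 1 := by exact_mod_cast congrArg (fun x : ℝ => (x : ℂ)) hs2
  have hW : w * (starRingEnd ℂ) w = ((‖ν‖^2*‖k'‖^2*τ^2 + μ^2*‖ν‖^2*‖ℓ‖^2 : ℝ) : ℂ) := by
    rw [Complex.mul_conj]
    norm_cast
    have h1 : Complex.normSq w = Complex.normSq ν * Complex.normSq ((τ:ℂ)*k' + (μ:ℂ)*ℓ) := by
      rw [hw, mul_add]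
      rw [show ν * ((τ:ℂ)*k') + ν * ((μ:ℂ)*ℓ) = ν * ((τ:ℂ)*k' + (μ:ℂ)*ℓ) by ring]
      exact _root_.map_mul Complex.normSq ν _
    have hcross : (((τ:ℂ)*k') * (starRingEnd ℂ) ((μ:ℂ)*ℓ)).re = 0 := by
      have h2 : ((τ:ℂ)*k') * (starRingEnd ℂ) ((μ:ℂ)*ℓ)
          = ((τ*μ : ℝ) : ℂ) * (k' * (starRingEnd ℂ) ℓ) := by
        simp [_root_.map_mul, Complex.conj_ofReal]; push_cast; ring
      rw [h2, Complex.mul_re]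
      simp [horth]
    rw [h1, Complex.normSq_add, hcross]
    simp [Complex.normSq_mul, Complex.normSq_ofReal, Complex.normSq_eq_norm_sq,
      sq_abs]
    rw [mul_pow, mul_pow, sq_abs, sq_abs]; ring
  have ha : a * a = ((ϑ:ℂ))^2 := by
    rw [ha']; push_cast; linear_combination (ϑ:ℂ)^2 * hs2C
  rw [hW]
  constructor
  · intro h
    push_cast at h ⊢
    linear_combination h + ha
  · intro h
    push_cast at h ⊢
    linear_combination h - ha

/-- The essential spectrum of the asymptotic Dirac operators: eigenvalues of the symbol
`S_s(τ)` and their union over `τ ∈ ℝ`. -/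
theorem stmt19 (ϑstar : ℝ) (hϑ : ϑstar ≠ 0) (ν k' ℓ : ℂ)
    (hν : ν ≠ 0) (hk : k' ≠ 0) (hℓ : ℓ ≠ 0)
    (horth : (k' * (starRingEnd ℂ) ℓ).re = 0)
    (μ : ℝ) (s : ℝ) (hs : s = 1 ∨ s = -1) :
    (∀ τ : ℝ, spectrum ℂ (Ssym ϑstar ν k' ℓ μ s τ) =
      {(Real.sqrt (‖ν‖ ^ 2 * ‖k'‖ ^ 2 * τ ^ 2 + μ ^ 2 * ‖ν‖ ^ 2 * ‖ℓ‖ ^ 2 + ϑstar ^ 2) : ℂ),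
       -(Real.sqrt (‖ν‖ ^ 2 * ‖k'‖ ^ 2 * τ ^ 2 + μ ^ 2 * ‖ν‖ ^ 2 * ‖ℓ‖ ^ 2 + ϑstar ^ 2) : ℂ)}) ∧
    (∀ z : ℂ,
      (∃ τ : ℝ, ¬IsUnit (Ssym ϑstar ν k' ℓ μ s τ - z • (1 : Matrix (Fin 2) (Fin 2) ℂ))) ↔
      (z.im = 0 ∧ |ϑstar| ^ 2 + μ ^ 2 * ‖ν‖ ^ 2 * ‖ℓ‖ ^ 2 ≤ z.re ^ 2)) ∧
    (⋃ τ : ℝ, spectrum ℂ (Ssym ϑstar ν k' ℓ μ s τ)) =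
      (fun x : ℝ => (x : ℂ)) ''
        {x : ℝ | Real.sqrt (|ϑstar| ^ 2 + μ ^ 2 * ‖ν‖ ^ 2 * ‖ℓ‖ ^ 2) ≤ |x|} := by
  have hs2 : s ^ 2 = 1 := by rcases hs with rfl | rfl <;> norm_num
  set c := ‖ν‖ ^ 2 * ‖k'‖ ^ 2 with hc
  set e := μ ^ 2 * ‖ν‖ ^ 2 * ‖ℓ‖ ^ 2 with he
  have hc0 : 0 < c := by
    rw [hc]
    have := norm_pos_iff.mpr hν
    have := norm_pos_iff.mpr hk
    positivity
  have he0 : 0 ≤ e := by rw [he]; positivity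
  have hϑ2 : 0 < ϑstar ^ 2 := by positivity
  have hkey : ∀ (τ : ℝ) (z : ℂ),
      (¬ IsUnit (Ssym ϑstar ν k' ℓ μ s τ - z • (1 : Matrix (Fin 2) (Fin 2) ℂ))) ↔
      z ^ 2 = ((c * τ ^ 2 + e + ϑstar ^ 2 : ℝ) : ℂ) := by
    intro τ z
    rw [hc, he]
    exact key ϑstar ν k' ℓ hν hk hℓ horth μ s hs2 τ z
  have hmem : ∀ (τ : ℝ) (z : ℂ), z ∈ spectrum ℂ (Ssym ϑstar ν k' ℓ μ s τ) ↔
      z ^ 2 = ((c * τ ^ 2 + e + ϑstar ^ 2 : ℝ) : ℂ) := by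
    intro τ z
    rw [spectrum.mem_iff, Algebra.algebraMap_eq_smul_one,
      show z • (1 : Matrix (Fin 2) (Fin 2) ℂ) - Ssym ϑstar ν k' ℓ μ s τ
        = -(Ssym ϑstar ν k' ℓ μ s τ - z • 1) by module, IsUnit.neg_iff]
    exact hkey τ z
  have hQpos : ∀ τ : ℝ, 0 < c * τ ^ 2 + e + ϑstar ^ 2 := by
    intro τ
    nlinarith [mul_nonneg hc0.le (sq_nonneg τ)]
  have hsq : ∀ τ : ℝ, (Real.sqrt (c * τ ^ 2 + e + ϑstar ^ 2)) ^ 2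
      = c * τ ^ 2 + e + ϑstar ^ 2 := fun τ => Real.sq_sqrt (hQpos τ).le
  have hroots : ∀ (τ : ℝ) (z : ℂ), z ^ 2 = ((c * τ ^ 2 + e + ϑstar ^ 2 : ℝ) : ℂ) ↔
      z = (Real.sqrt (c * τ ^ 2 + e + ϑstar ^ 2) : ℂ) ∨
      z = -(Real.sqrt (c * τ ^ 2 + e + ϑstar ^ 2) : ℂ) := by
    intro τ z
    set r := Real.sqrt (c * τ ^ 2 + e + ϑstar ^ 2) with hr
    have h0 : ((c * τ ^ 2 + e + ϑstar ^ 2 : ℝ) : ℂ) = ((r : ℂ)) ^ 2 := by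
      rw [← hsq τ]; push_cast; ring
    rw [h0]
    constructor
    · intro h
      have h2 : (z - r) * (z + r) = 0 := by linear_combination h
      rcases mul_eq_zero.mp h2 with h3 | h3
      · exact Or.inl (sub_eq_zero.mp h3)
      · exact Or.inr (eq_neg_of_add_eq_zero_left h3)
    · rintro (rfl | rfl) <;> ring
  have part1 : ∀ τ : ℝ, spectrum ℂ (Ssym ϑstar ν k' ℓ μ s τ) =
      {(Real.sqrt (c * τ ^ 2 + e + ϑstar ^ 2) : ℂ),
       -(Real.sqrt (c * τ ^ 2 + e + ϑstar ^ 2) : ℂ)} := by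
    intro τ
    ext z
    rw [hmem τ z, hroots τ z]
    simp
  refine ⟨part1, ?_, ?_⟩
  · intro z
    constructor
    · rintro ⟨τ, hτ⟩
      rw [hkey τ z] at hτ
      set x := c * τ ^ 2 + e + ϑstar ^ 2 with hx
      have hxge : e + ϑstar ^ 2 ≤ x := by
        rw [hx]; nlinarith [mul_nonneg hc0.le (sq_nonneg τ)]
      have hx0 : 0 < x := hQpos τ
      rw [pow_two] at hτ
      have h1 := congrArg Complex.re hτ
      have h2 := congrArg Complex.im hτ
      simp [Complex.mul_re, Complex.mul_im] at h1 h2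
      have him : z.im = 0 := by
        rcases mul_eq_zero.mp (by linarith : z.re * z.im = 0) with h3 | h3
        · exfalso; nlinarith [sq_nonneg z.im]
        · exact h3
      refine ⟨him, ?_⟩
      rw [sq_abs]
      nlinarith
    · rintro ⟨him, hge⟩
      rw [sq_abs] at hge
      refine ⟨Real.sqrt ((z.re ^ 2 - (ϑstar ^ 2 + e)) / c), ?_⟩
      rw [hkey]
      have ht2 : (Real.sqrt ((z.re ^ 2 - (ϑstar ^ 2 + e)) / c)) ^ 2
          = (z.re ^ 2 - (ϑstar ^ 2 + e)) / c :=
        Real.sq_sqrt (div_nonneg (by linarith) hc0.le)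
      have hQ : c * (Real.sqrt ((z.re ^ 2 - (ϑstar ^ 2 + e)) / c)) ^ 2 + e + ϑstar ^ 2
          = z.re ^ 2 := by
        rw [ht2]; field_simp; ring
      rw [hQ]
      have hz : z = (z.re : ℂ) := by
        apply Complex.ext <;> simp [him]
      rw [hz]
      norm_num
  · ext z
    simp only [Set.mem_iUnion, part1, Set.mem_insert_iff, Set.mem_singleton_iff,
      Set.mem_image, Set.mem_setOf_eq]
    have hD : (0 : ℝ) ≤ |ϑstar| ^ 2 + e := by positivity
    constructor
    · rintro ⟨τ, h | h⟩
      · refine ⟨Real.sqrt (c * τ ^ 2 + e + ϑstar ^ 2), ?_, h.symm⟩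
        rw [abs_of_nonneg (Real.sqrt_nonneg _)]
        apply Real.sqrt_le_sqrt
        rw [sq_abs]; nlinarith [mul_nonneg hc0.le (sq_nonneg τ)]
      · refine ⟨-Real.sqrt (c * τ ^ 2 + e + ϑstar ^ 2), ?_, ?_⟩
        · rw [abs_neg, abs_of_nonneg (Real.sqrt_nonneg _)]
          apply Real.sqrt_le_sqrt
          rw [sq_abs]; nlinarith [mul_nonneg hc0.le (sq_nonneg τ)]
        · rw [h]; push_cast; ring
    · rintro ⟨x, hxD, rfl⟩
      have hx2 : ϑstar ^ 2 + e ≤ x ^ 2 := by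
        nlinarith [Real.sq_sqrt hD, Real.sqrt_nonneg (|ϑstar| ^ 2 + e), sq_abs x,
          sq_abs ϑstar, abs_nonneg x,
          mul_self_le_mul_self (Real.sqrt_nonneg (|ϑstar| ^ 2 + e)) hxD]
      set τ0 := Real.sqrt ((x ^ 2 - (ϑstar ^ 2 + e)) / c) with hτ0
      have ht2 : τ0 ^ 2 = (x ^ 2 - (ϑstar ^ 2 + e)) / c :=
        Real.sq_sqrt (div_nonneg (by linarith) hc0.le)
      have hQ : c * τ0 ^ 2 + e + ϑstar ^ 2 = x ^ 2 := by rw [ht2]; field_simp; ring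
      refine ⟨τ0, ?_⟩
      rw [hQ, Real.sqrt_sq_eq_abs]
      rcases abs_cases x with ⟨h1, _⟩ | ⟨h1, _⟩
      · left; rw [h1]
      · right; rw [h1]; push_cast; ring
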